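/- Let β, γ be real numbers with 0 < |β| < 1, let (X_t)_{t∈ℤ} be identically distributed real random variables with 𝔼[|X_0|] < ∞, and for ν ∈ ℝ, T ∈ ℕ let g_{ν,T}(t) = e^{2πiνt}/√(2T+1) for −T ≤ t ≤ T and 0 otherwise, z_ν := e^{2πiν}, and f_{ν,T} := γ S (I − βS)^{−1} g_{ν,T}. Then the random variable R_{ν,T} := Σ_{t∈ℤ} (f_{ν,T}(t) − γ z_ν (1 − β z_ν)^{−1} g_{ν,T}(t)) X_t converges in L¹ and satisfies 𝔼[|R_{ν,T}|] ≤ (2/√(2T+1)) · (|γ|/|β|) · (1 − |β|)^{−2} · 𝔼[|X_0|]. -/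

import Mathlib

open MeasureTheory ProbabilityTheory Filter
open scoped ENNReal NNReal

/-- The normalized complex wave `g_{ν,T}` of frequency `ν` on the window `[-T, T]`:
`g_{ν,T} t = e^{2πiνt} / √(2T+1)` for `-T ≤ t ≤ T` and `0` otherwise. -/
noncomputable def waveWindow (ν : ℝ) (T : ℕ) : ℤ → ℂ :=
  fun t => if -(T : ℤ) ≤ t ∧ t ≤ (T : ℤ)
    then Complex.exp (2 * Real.pi * Complex.I * (ν : ℂ) * (t : ℂ)) / (Real.sqrt (2 * T + 1) : ℂ)
    else 0

/-- The von Neumann inverse `(I - βS)⁻¹ = ∑_{j ≥ 0} (βS)^j` applied to a complex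
sequence `g`, where `S` is the shift `(S g) t = g (t + 1)`. -/
noncomputable def vonNeumannInvC (β : ℝ) (g : ℤ → ℂ) : ℤ → ℂ :=
  fun t => ∑' j : ℕ, (β : ℂ) ^ j * g (t + j)

/-- The kernel `f_{ν,T} = γ S (I - βS)⁻¹ g_{ν,T}`. -/
noncomputable def fNuT (β γ ν : ℝ) (T : ℕ) : ℤ → ℂ :=
  fun t => (γ : ℂ) * vonNeumannInvC β (waveWindow ν T) (t + 1)

namespace Stmt18Aux

/-- `1` if exactly one of `t+1+j`, `t` lies in the window `[-T,T]`, else `0`. -/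
noncomputable def ee (T : ℕ) (t : ℤ) (j : ℕ) : ℝ :=
  if ((-(T : ℤ) ≤ t + 1 + j ∧ t + 1 + j ≤ (T : ℤ)) ↔ (-(T : ℤ) ≤ t ∧ t ≤ (T : ℤ)))
    then 0 else 1

lemma ee_nonneg (T : ℕ) (t : ℤ) (j : ℕ) : 0 ≤ ee T t j := by
  unfold ee; split <;> norm_num

lemma ee_le_one (T : ℕ) (t : ℤ) (j : ℕ) : ee T t j ≤ 1 := by
  unfold ee; split <;> norm_num

lemma norm_exp_int (ν : ℝ) (s : ℤ) :
    ‖Complex.exp (2 * Real.pi * Complex.I * (ν : ℂ) * (s : ℂ))‖ = 1 := by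
  have h : (2 * (Real.pi : ℂ) * Complex.I * (ν : ℂ) * (s : ℂ))
      = ((2 * Real.pi * ν * s : ℝ) : ℂ) * Complex.I := by push_cast; ring
  rw [h, Complex.norm_exp_ofReal_mul_I]

lemma norm_z (ν : ℝ) : ‖Complex.exp (2 * Real.pi * Complex.I * (ν : ℂ))‖ = 1 := by
  simpa using norm_exp_int ν 1

lemma exp_pow (ν : ℝ) (t : ℤ) (j : ℕ) :
    Complex.exp (2 * Real.pi * Complex.I * (ν : ℂ)) ^ (j + 1)
      * Complex.exp (2 * Real.pi * Complex.I * (ν : ℂ) * (t : ℂ))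
    = Complex.exp (2 * Real.pi * Complex.I * (ν : ℂ) * ((t + 1 + (j : ℤ) : ℤ) : ℂ)) := by
  rw [← Complex.exp_nat_mul, ← Complex.exp_add]
  congr 1
  push_cast; ring

lemma sq_pos (T : ℕ) : 0 < Real.sqrt (2 * T + 1) := Real.sqrt_pos.2 (by positivity)

lemma norm_waveWindow_le (ν : ℝ) (T : ℕ) (s : ℤ) :
    ‖waveWindow ν T s‖ ≤ 1 / Real.sqrt (2 * T + 1) := by
  unfold waveWindow
  split
  · rw [norm_div, norm_exp_int, Complex.norm_real, Real.norm_eq_abs,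
      abs_of_pos (sq_pos T)]
  · simp only [norm_zero]
    positivity

/-- key pointwise bound on each term of the series. -/
lemma term_bound (ν : ℝ) (T : ℕ) (t : ℤ) (j : ℕ) :
    ‖waveWindow ν T (t + 1 + j)
        - Complex.exp (2 * Real.pi * Complex.I * (ν : ℂ)) ^ (j + 1) * waveWindow ν T t‖
      ≤ ee T t j / Real.sqrt (2 * T + 1) := by
  by_cases h1 : (-(T : ℤ) ≤ t + 1 + j ∧ t + 1 + j ≤ (T : ℤ)) <;>
    by_cases h2 : (-(T : ℤ) ≤ t ∧ t ≤ (T : ℤ))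
  · -- both in window: exact cancellation
    have hee : ee T t j = 0 := by unfold ee; rw [if_pos (iff_of_true h1 h2)]
    rw [hee, zero_div]
    have : waveWindow ν T (t + 1 + j)
        = Complex.exp (2 * Real.pi * Complex.I * (ν : ℂ)) ^ (j + 1) * waveWindow ν T t := by
      unfold waveWindow
      rw [if_pos h1, if_pos h2, ← mul_div_assoc, exp_pow]
    rw [this, sub_self, norm_zero]
  · have hee : ee T t j = 1 := by
      unfold ee; rw [if_neg (by tauto)]
    rw [hee]
    have hw : waveWindow ν T t = 0 := by unfold waveWindow; rw [if_neg h2]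
    rw [hw, mul_zero, sub_zero]
    simpa using norm_waveWindow_le ν T (t + 1 + j)
  · have hee : ee T t j = 1 := by
      unfold ee; rw [if_neg (by tauto)]
    rw [hee]
    have hw : waveWindow ν T (t + 1 + j) = 0 := by unfold waveWindow; rw [if_neg h1]
    rw [hw, zero_sub, norm_neg, norm_mul, norm_pow, norm_z, one_pow, one_mul]
    simpa using norm_waveWindow_le ν T t
  · have hee : ee T t j = 0 := by unfold ee; rw [if_pos (iff_of_false h1 h2)]
    have hw1 : waveWindow ν T (t + 1 + j) = 0 := by unfold waveWindow; rw [if_neg h1]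
    have hw2 : waveWindow ν T t = 0 := by unfold waveWindow; rw [if_neg h2]
    rw [hee, hw1, hw2, mul_zero, sub_zero, norm_zero, zero_div]

/-- the support of `ee T · j` lies in an explicit finite set of cardinality `≤ 2(j+1)`. -/
lemma ee_support (T : ℕ) (j : ℕ) (t : ℤ) (ht : t ∉ (Finset.Icc ((T : ℤ) - j) (T : ℤ) ∪
    Finset.Icc (-(T : ℤ) - 1 - j) (-(T : ℤ) - 1))) : ee T t j = 0 := by
  simp only [Finset.mem_union, Finset.mem_Icc, not_or, not_and_or, not_le] at ht
  unfold ee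
  rw [if_pos (by omega)]

lemma ofReal_norm_eq_coe_nnnorm {E : Type*} [SeminormedAddCommGroup E] (a : E) :
    ENNReal.ofReal ‖a‖ = (‖a‖₊ : ℝ≥0∞) := ENNReal.ofReal_eq_coe_nnreal _

end Stmt18Aux

open Stmt18Aux in
theorem stmt_18 {Ω : Type*} [MeasureSpace Ω] [IsProbabilityMeasure (ℙ : Measure Ω)]
    (β γ : ℝ) (hβ0 : 0 < |β|) (hβ1 : |β| < 1)
    (X : ℤ → Ω → ℝ) (hXmeas : ∀ t, Measurable (X t))
    (hXid : ∀ t, Measure.map (X t) ℙ = Measure.map (X 0) ℙ)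
    (hXint : Integrable (X 0) ℙ)
    (ν : ℝ) (T : ℕ) :
    ∃ R : Ω → ℂ,
      Integrable R ℙ ∧
      Tendsto (fun N : ℕ =>
          eLpNorm (fun ω => R ω - ∑ t ∈ Finset.Icc (-(N : ℤ)) (N : ℤ),
              (fNuT β γ ν T t
                - (γ : ℂ) * Complex.exp (2 * Real.pi * Complex.I * (ν : ℂ))
                  * (1 - (β : ℂ) * Complex.exp (2 * Real.pi * Complex.I * (ν : ℂ)))⁻¹
                  * waveWindow ν T t) * (X t ω : ℂ)) 1 ℙ)
        atTop (nhds 0) ∧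
      ∫ ω, ‖R ω‖ ∂ℙ
        ≤ 2 / Real.sqrt (2 * T + 1) * (|γ| / |β|) * ((1 - |β|) ^ 2)⁻¹ * ∫ ω, |X 0 ω| ∂ℙ := by
  classical
  set z : ℂ := Complex.exp (2 * Real.pi * Complex.I * (ν : ℂ)) with hzdef
  set sq : ℝ := Real.sqrt (2 * T + 1) with hsqdef
  have hsq : 0 < sq := sq_pos T
  set x : ℝ := |β| with hxdef
  have hx0 : 0 < x := hβ0
  have hx1 : x < 1 := hβ1
  -- the l¹ kernel
  set h : ℤ → ℂ := fun t =>
    fNuT β γ ν T t - (γ : ℂ) * z * (1 - (β : ℂ) * z)⁻¹ * waveWindow ν T t with hhdef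
  have hzn : ‖z‖ = 1 := norm_z ν
  have hβz : ‖(β : ℂ) * z‖ < 1 := by
    rw [norm_mul, hzn, mul_one, Complex.norm_real, Real.norm_eq_abs]; exact hβ1
  have hnormβ : ∀ j : ℕ, ‖(β : ℂ) ^ j‖ = x ^ j := by
    intro j; rw [norm_pow, Complex.norm_real, Real.norm_eq_abs]
  have hgeo : Summable fun j : ℕ => x ^ j := summable_geometric_of_lt_one hx0.le hx1
  -- summability of the two series
  have S1 : ∀ t : ℤ, Summable fun j : ℕ => (β : ℂ) ^ j * waveWindow ν T (t + 1 + j) := by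
    intro t
    apply Summable.of_norm
    apply Summable.of_nonneg_of_le (fun j => norm_nonneg _) (fun j => ?_)
      (hgeo.mul_right (1 / sq))
    rw [norm_mul, hnormβ]
    exact mul_le_mul_of_nonneg_left (norm_waveWindow_le ν T _) (pow_nonneg hx0.le j)
  have S2 : ∀ t : ℤ, Summable fun j : ℕ => (β : ℂ) ^ j * z ^ (j + 1) * waveWindow ν T t := by
    intro t
    have : (fun j : ℕ => (β : ℂ) ^ j * z ^ (j + 1) * waveWindow ν T t)
        = fun j : ℕ => ((β : ℂ) * z) ^ j * (z * waveWindow ν T t) := by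
      funext j; rw [mul_pow]; ring
    rw [this]
    exact (summable_geometric_of_norm_lt_one hβz).mul_right _
  -- rewrite h t as a single series
  have hht : ∀ t : ℤ, h t = (γ : ℂ) *
      ∑' j : ℕ, (β : ℂ) ^ j * (waveWindow ν T (t + 1 + j) - z ^ (j + 1) * waveWindow ν T t) := by
    intro t
    have hc : (γ : ℂ) * z * (1 - (β : ℂ) * z)⁻¹ * waveWindow ν T t
        = (γ : ℂ) * ∑' j : ℕ, (β : ℂ) ^ j * z ^ (j + 1) * waveWindow ν T t := by
      have e1 : (fun j : ℕ => (β : ℂ) ^ j * z ^ (j + 1) * waveWindow ν T t)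
          = fun j : ℕ => ((β : ℂ) * z) ^ j * (z * waveWindow ν T t) := by
        funext j; rw [mul_pow]; ring
      rw [e1, tsum_mul_right, tsum_geometric_of_norm_lt_one hβz]
      ring
    have e2 : fNuT β γ ν T t = (γ : ℂ) * ∑' j : ℕ, (β : ℂ) ^ j * waveWindow ν T (t + 1 + j) := rfl
    rw [hhdef]
    simp only [e2, hc]
    rw [← mul_sub, ← Summable.tsum_sub (S1 t) (S2 t)]
    congr 1
    exact tsum_congr fun j => by ring
  -- pointwise l¹ bound
  have hsumee : ∀ t : ℤ, Summable fun j : ℕ => x ^ j * ee T t j := by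
    intro t
    apply Summable.of_nonneg_of_le
      (fun j => mul_nonneg (pow_nonneg hx0.le j) (ee_nonneg T t j)) (fun j => ?_) hgeo
    calc x ^ j * ee T t j ≤ x ^ j * 1 :=
          mul_le_mul_of_nonneg_left (ee_le_one T t j) (pow_nonneg hx0.le j)
      _ = x ^ j := mul_one _
  have hnormh : ∀ t : ℤ, ‖h t‖ ≤ |γ| / sq * ∑' j : ℕ, x ^ j * ee T t j := by
    intro t
    rw [hht t, norm_mul, Complex.norm_real, Real.norm_eq_abs]
    have hsn : Summable fun j : ℕ =>
        ‖(β : ℂ) ^ j * (waveWindow ν T (t + 1 + j) - z ^ (j + 1) * waveWindow ν T t)‖ := by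
      apply Summable.of_nonneg_of_le (fun j => norm_nonneg _) (fun j => ?_)
        (hgeo.mul_right (1 / sq))
      rw [norm_mul, hnormβ]
      refine mul_le_mul_of_nonneg_left (le_trans (term_bound ν T t j) ?_)
        (pow_nonneg hx0.le j)
      exact (div_le_div_iff_of_pos_right hsq).2 (ee_le_one T t j)
    calc |γ| * ‖∑' j : ℕ, (β : ℂ) ^ j *
          (waveWindow ν T (t + 1 + j) - z ^ (j + 1) * waveWindow ν T t)‖
        ≤ |γ| * ∑' j : ℕ, ‖(β : ℂ) ^ j *
          (waveWindow ν T (t + 1 + j) - z ^ (j + 1) * waveWindow ν T t)‖ :=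
          mul_le_mul_of_nonneg_left (norm_tsum_le_tsum_norm hsn) (abs_nonneg γ)
      _ ≤ |γ| * ∑' j : ℕ, x ^ j * (ee T t j / sq) := by
          refine mul_le_mul_of_nonneg_left (Summable.tsum_le_tsum (fun j => ?_) hsn ?_) (abs_nonneg γ)
          · rw [norm_mul, hnormβ]
            exact mul_le_mul_of_nonneg_left (term_bound ν T t j) (pow_nonneg hx0.le j)
          · have he : (fun j : ℕ => x ^ j * (ee T t j / sq))
                = fun j : ℕ => x ^ j * ee T t j / sq := by funext j; ring
            rw [he]
            exact (hsumee t).div_const sq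
      _ = |γ| / sq * ∑' j : ℕ, x ^ j * ee T t j := by
          have he : ∑' j : ℕ, x ^ j * (ee T t j / sq)
              = (∑' j : ℕ, x ^ j * ee T t j) / sq := by
            rw [← tsum_div_const]
            exact tsum_congr fun j => by ring
          rw [he]
          ring
  -- global l¹ bound in ℝ≥0∞
  set A : ℝ≥0∞ := ∑' t : ℤ, (‖h t‖₊ : ℝ≥0∞) with hAdef
  have hperj : ∀ j : ℕ, ∑' t : ℤ, ENNReal.ofReal (x ^ j * ee T t j)
      ≤ ENNReal.ofReal (2 * (j + 1) * x ^ j) := by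
    intro j
    set s : Finset ℤ := Finset.Icc ((T : ℤ) - j) (T : ℤ) ∪
      Finset.Icc (-(T : ℤ) - 1 - j) (-(T : ℤ) - 1) with hsdef
    have hts : ∑' t : ℤ, ENNReal.ofReal (x ^ j * ee T t j)
        = ∑ t ∈ s, ENNReal.ofReal (x ^ j * ee T t j) := by
      apply tsum_eq_sum
      intro t ht
      rw [ee_support T j t ht, mul_zero, ENNReal.ofReal_zero]
    rw [hts]
    calc ∑ t ∈ s, ENNReal.ofReal (x ^ j * ee T t j)
        ≤ ∑ _t ∈ s, ENNReal.ofReal (x ^ j) := by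
          refine Finset.sum_le_sum fun t _ => ENNReal.ofReal_le_ofReal ?_
          calc x ^ j * ee T t j ≤ x ^ j * 1 :=
                mul_le_mul_of_nonneg_left (ee_le_one T t j) (pow_nonneg hx0.le j)
            _ = x ^ j := mul_one _
      _ = (s.card : ℝ≥0∞) * ENNReal.ofReal (x ^ j) := by
          rw [Finset.sum_const, nsmul_eq_mul]
      _ ≤ ((2 * (j + 1) : ℕ) : ℝ≥0∞) * ENNReal.ofReal (x ^ j) := by
          refine mul_le_mul_left ?_ _
          refine Nat.cast_le.2 ?_
          calc s.card ≤ (Finset.Icc ((T : ℤ) - j) (T : ℤ)).card +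
                (Finset.Icc (-(T : ℤ) - 1 - j) (-(T : ℤ) - 1)).card := Finset.card_union_le _ _
            _ ≤ 2 * (j + 1) := by
                rw [Int.card_Icc, Int.card_Icc]
                omega
      _ = ENNReal.ofReal (2 * (j + 1) * x ^ j) := by
          rw [← ENNReal.ofReal_natCast (2 * (j + 1)), ← ENNReal.ofReal_mul (by positivity)]
          norm_num
  -- the series ∑ 2(j+1)x^j
  have hsum2 : Summable fun j : ℕ => 2 * ((j : ℝ) + 1) * x ^ j := by
    have h1' : Summable fun j : ℕ => (j : ℝ) * x ^ j := by
      have hn : ‖x‖ < 1 := by rwa [Real.norm_eq_abs, abs_of_nonneg hx0.le]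
      simpa using summable_pow_mul_geometric_of_norm_lt_one (R := ℝ) 1 hn
    have := (h1'.add hgeo).mul_left 2
    apply this.congr
    intro j; ring
  have hKval : ∑' j : ℕ, 2 * ((j : ℝ) + 1) * x ^ j = 2 * ((1 - x) ^ 2)⁻¹ := by
    have hn : ‖x‖ < 1 := by rwa [Real.norm_eq_abs, abs_of_nonneg hx0.le]
    have h1' : Summable fun j : ℕ => (j : ℝ) * x ^ j := by
      simpa using summable_pow_mul_geometric_of_norm_lt_one (R := ℝ) 1 hn
    have e1 : (fun j : ℕ => 2 * ((j : ℝ) + 1) * x ^ j)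
        = fun j : ℕ => 2 * ((j : ℝ) * x ^ j + x ^ j) := by funext j; ring
    rw [e1, tsum_mul_left, Summable.tsum_add h1' hgeo,
      tsum_coe_mul_geometric_of_norm_lt_one hn, tsum_geometric_of_lt_one hx0.le hx1]
    have hx1' : (1 : ℝ) - x ≠ 0 := sub_ne_zero_of_ne (by linarith)
    field_simp
    ring
  have hAbound : A ≤ ENNReal.ofReal (|γ| / sq * (2 * ((1 - x) ^ 2)⁻¹)) := by
    have step1 : A ≤ ∑' t : ℤ, (ENNReal.ofReal (|γ| / sq) *
        ∑' j : ℕ, ENNReal.ofReal (x ^ j * ee T t j)) := by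
      refine ENNReal.tsum_le_tsum fun t => ?_
      rw [← ofReal_norm_eq_coe_nnnorm,
        ← ENNReal.ofReal_tsum_of_nonneg
          (fun j => mul_nonneg (pow_nonneg hx0.le j) (ee_nonneg T t j)) (hsumee t),
        ← ENNReal.ofReal_mul (div_nonneg (abs_nonneg γ) hsq.le)]
      exact ENNReal.ofReal_le_ofReal (hnormh t)
    have step2 : ∑' t : ℤ, (ENNReal.ofReal (|γ| / sq) *
        ∑' j : ℕ, ENNReal.ofReal (x ^ j * ee T t j))
        = ENNReal.ofReal (|γ| / sq) * ∑' j : ℕ, ∑' t : ℤ, ENNReal.ofReal (x ^ j * ee T t j) := by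
      rw [ENNReal.tsum_mul_left]
      congr 1
      exact ENNReal.tsum_comm
    have step3 : ∑' j : ℕ, ∑' t : ℤ, ENNReal.ofReal (x ^ j * ee T t j)
        ≤ ENNReal.ofReal (2 * ((1 - x) ^ 2)⁻¹) := by
      calc ∑' j : ℕ, ∑' t : ℤ, ENNReal.ofReal (x ^ j * ee T t j)
          ≤ ∑' j : ℕ, ENNReal.ofReal (2 * (j + 1) * x ^ j) := ENNReal.tsum_le_tsum hperj
        _ = ENNReal.ofReal (∑' j : ℕ, 2 * ((j : ℝ) + 1) * x ^ j) := by
            rw [ENNReal.ofReal_tsum_of_nonneg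
              (fun j => by have := pow_nonneg hx0.le j; positivity) hsum2]
        _ = ENNReal.ofReal (2 * ((1 - x) ^ 2)⁻¹) := by rw [hKval]
      done
    calc A ≤ _ := step1
      _ = _ := step2
      _ ≤ ENNReal.ofReal (|γ| / sq) * ENNReal.ofReal (2 * ((1 - x) ^ 2)⁻¹) :=
          mul_le_mul_right step3 _
      _ = ENNReal.ofReal (|γ| / sq * (2 * ((1 - x) ^ 2)⁻¹)) := by
          rw [← ENNReal.ofReal_mul (by positivity)]
  have hAtop : A ≠ ⊤ := ne_top_of_le_ne_top ENNReal.ofReal_ne_top hAbound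
  -- the first moment in ℝ≥0∞
  set M : ℝ≥0∞ := ∫⁻ ω, (‖X 0 ω‖₊ : ℝ≥0∞) ∂ℙ with hMdef
  have hMt : ∀ t : ℤ, ∫⁻ ω, (‖X t ω‖₊ : ℝ≥0∞) ∂ℙ = M := by
    intro t
    have hm : Measurable fun y : ℝ => (‖y‖₊ : ℝ≥0∞) := measurable_nnnorm.coe_nnreal_ennreal
    rw [hMdef, ← lintegral_map hm (hXmeas t), ← lintegral_map hm (hXmeas 0), hXid t]
  have hMtop : M ≠ ⊤ := hXint.2.ne
  -- the dominating function
  set G : Ω → ℝ≥0∞ := fun ω => ∑' t : ℤ, (‖h t‖₊ : ℝ≥0∞) * (‖X t ω‖₊ : ℝ≥0∞) with hGdef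
  have hGmeas : Measurable G := by
    apply Measurable.ennreal_tsum
    intro t
    exact measurable_const.mul ((hXmeas t).nnnorm.coe_nnreal_ennreal)
  have hGint : ∫⁻ ω, G ω ∂ℙ = A * M := by
    rw [hGdef]
    rw [lintegral_tsum fun t =>
      (((hXmeas t).nnnorm.coe_nnreal_ennreal).const_mul _).aemeasurable]
    calc ∑' t : ℤ, ∫⁻ ω, (‖h t‖₊ : ℝ≥0∞) * (‖X t ω‖₊ : ℝ≥0∞) ∂ℙ
        = ∑' t : ℤ, (‖h t‖₊ : ℝ≥0∞) * M := by
          congr 1; funext t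
          rw [lintegral_const_mul _ ((hXmeas t).nnnorm.coe_nnreal_ennreal), hMt t]
      _ = A * M := ENNReal.tsum_mul_right
  have hGae : ∀ᵐ ω ∂ℙ, G ω < ⊤ :=
    ae_lt_top hGmeas (by rw [hGint]; exact ENNReal.mul_ne_top hAtop hMtop)
  -- translation to pointwise summability
  have hnncoe : ∀ (t : ℤ) (ω : Ω), (‖h t * (X t ω : ℂ)‖₊ : ℝ≥0∞)
      = (‖h t‖₊ : ℝ≥0∞) * (‖X t ω‖₊ : ℝ≥0∞) := by
    intro t ω
    rw [nnnorm_mul, ENNReal.coe_mul, Complex.nnnorm_real]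
  have hsumae : ∀ᵐ ω ∂ℙ, Summable fun t : ℤ => ‖h t * (X t ω : ℂ)‖ := by
    filter_upwards [hGae] with ω hω
    have : (∑' t : ℤ, (‖h t * (X t ω : ℂ)‖₊ : ℝ≥0∞)) ≠ ⊤ := by
      simp only [hnncoe]
      exact hω.ne
    have hs := ENNReal.tsum_coe_ne_top_iff_summable.1 this
    exact NNReal.summable_coe.2 hs
  -- the limit random variable
  set R : Ω → ℂ := fun ω => ∑' t : ℤ, h t * (X t ω : ℂ) with hRdef
  -- partial sums tend to Icc windows
  have hIcc : Tendsto (fun N : ℕ => Finset.Icc (-(N : ℤ)) (N : ℤ)) atTop atTop := by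
    rw [tendsto_atTop_atTop]
    intro s
    refine ⟨s.sup fun t : ℤ => t.natAbs, fun a ha => ?_⟩
    intro t ht
    simp only [Finset.mem_Icc]
    have h1 : t.natAbs ≤ a := le_trans (Finset.le_sup ht) ha
    omega
  have hSmeas : ∀ N : ℕ, AEStronglyMeasurable
      (fun ω => ∑ t ∈ Finset.Icc (-(N : ℤ)) (N : ℤ), h t * (X t ω : ℂ)) ℙ := by
    intro N
    refine Measurable.aestronglyMeasurable ?_
    apply Finset.measurable_sum
    intro t _
    exact measurable_const.mul (Complex.continuous_ofReal.measurable.comp (hXmeas t))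
  have hRtendsto : ∀ᵐ ω ∂ℙ, Tendsto
      (fun N : ℕ => ∑ t ∈ Finset.Icc (-(N : ℤ)) (N : ℤ), h t * (X t ω : ℂ))
      atTop (nhds (R ω)) := by
    filter_upwards [hsumae] with ω hω
    have hs : Summable fun t : ℤ => h t * (X t ω : ℂ) := hω.of_norm
    exact hs.hasSum.comp hIcc
  have hRmeas : AEStronglyMeasurable R ℙ :=
    aestronglyMeasurable_of_tendsto_ae atTop hSmeas hRtendsto
  -- the a.e. domination of R
  have hRG : ∀ᵐ ω ∂ℙ, (‖R ω‖₊ : ℝ≥0∞) ≤ G ω := by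
    filter_upwards [hsumae] with ω hω
    rw [← ofReal_norm_eq_coe_nnnorm]
    calc ENNReal.ofReal ‖R ω‖ ≤ ENNReal.ofReal (∑' t : ℤ, ‖h t * (X t ω : ℂ)‖) :=
          ENNReal.ofReal_le_ofReal (norm_tsum_le_tsum_norm hω)
      _ = ∑' t : ℤ, ENNReal.ofReal ‖h t * (X t ω : ℂ)‖ :=
          ENNReal.ofReal_tsum_of_nonneg (fun t => norm_nonneg _) hω
      _ = G ω := by
          rw [hGdef]; congr 1; funext t; rw [ofReal_norm_eq_coe_nnnorm, hnncoe]
  have hRlint : ∫⁻ ω, (‖R ω‖₊ : ℝ≥0∞) ∂ℙ ≤ A * M := by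
    rw [← hGint]
    exact lintegral_mono_ae hRG
  have hRint : Integrable R ℙ := by
    refine ⟨hRmeas, ?_⟩
    exact lt_of_le_of_lt hRlint (ENNReal.mul_lt_top hAtop.lt_top hMtop.lt_top)
  refine ⟨R, hRint, ?_, ?_⟩
  · -- L¹ convergence
    have hrw : ∀ t : ℤ, fNuT β γ ν T t
        - (γ : ℂ) * z * (1 - (β : ℂ) * z)⁻¹ * waveWindow ν T t = h t := fun t => rfl
    simp only [hrw]
    have hbound : ∀ N : ℕ, eLpNorm (fun ω => R ω -
        ∑ t ∈ Finset.Icc (-(N : ℤ)) (N : ℤ), h t * (X t ω : ℂ)) 1 ℙ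
        ≤ (∑' t : {t : ℤ // t ∉ Finset.Icc (-(N : ℤ)) (N : ℤ)}, (‖h t‖₊ : ℝ≥0∞)) * M := by
      intro N
      rw [eLpNorm_one_eq_lintegral_enorm]
      have hptw : ∀ᵐ ω ∂ℙ, (‖R ω - ∑ t ∈ Finset.Icc (-(N : ℤ)) (N : ℤ),
          h t * (X t ω : ℂ)‖₊ : ℝ≥0∞)
          ≤ ∑' t : {t : ℤ // t ∉ Finset.Icc (-(N : ℤ)) (N : ℤ)},
              (‖h t‖₊ : ℝ≥0∞) * (‖X t ω‖₊ : ℝ≥0∞) := by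
        filter_upwards [hsumae] with ω hω
        have hs : Summable fun t : ℤ => h t * (X t ω : ℂ) := hω.of_norm
        have hdiff : R ω - ∑ t ∈ Finset.Icc (-(N : ℤ)) (N : ℤ), h t * (X t ω : ℂ)
            = ∑' t : {t : ℤ // t ∉ Finset.Icc (-(N : ℤ)) (N : ℤ)}, h t * (X t ω : ℂ) := by
          have h5 := Summable.sum_add_tsum_compl (s := Finset.Icc (-(N : ℤ)) (N : ℤ)) hs
          rw [hRdef]
          simp only [← h5]
          rw [add_sub_cancel_left]
          rfl
        rw [hdiff, ← ofReal_norm_eq_coe_nnnorm]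
        have hωs : Summable fun t : {t : ℤ // t ∉ Finset.Icc (-(N : ℤ)) (N : ℤ)} =>
            ‖h t * (X t ω : ℂ)‖ := hω.subtype _
        calc ENNReal.ofReal ‖∑' t : {t : ℤ // t ∉ Finset.Icc (-(N : ℤ)) (N : ℤ)},
              h t * (X t ω : ℂ)‖
            ≤ ENNReal.ofReal (∑' t : {t : ℤ // t ∉ Finset.Icc (-(N : ℤ)) (N : ℤ)},
              ‖h t * (X t ω : ℂ)‖) := ENNReal.ofReal_le_ofReal (norm_tsum_le_tsum_norm hωs)
          _ = ∑' t : {t : ℤ // t ∉ Finset.Icc (-(N : ℤ)) (N : ℤ)},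
              ENNReal.ofReal ‖h t * (X t ω : ℂ)‖ :=
              ENNReal.ofReal_tsum_of_nonneg (fun t => norm_nonneg _) hωs
          _ = ∑' t : {t : ℤ // t ∉ Finset.Icc (-(N : ℤ)) (N : ℤ)},
              (‖h t‖₊ : ℝ≥0∞) * (‖X t ω‖₊ : ℝ≥0∞) := by
              congr 1; funext t; rw [ofReal_norm_eq_coe_nnnorm, hnncoe]
      calc ∫⁻ ω, (‖R ω - ∑ t ∈ Finset.Icc (-(N : ℤ)) (N : ℤ), h t * (X t ω : ℂ)‖₊ : ℝ≥0∞) ∂ℙ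
          ≤ ∫⁻ ω, ∑' t : {t : ℤ // t ∉ Finset.Icc (-(N : ℤ)) (N : ℤ)},
              (‖h t‖₊ : ℝ≥0∞) * (‖X t ω‖₊ : ℝ≥0∞) ∂ℙ := lintegral_mono_ae hptw
        _ = ∑' t : {t : ℤ // t ∉ Finset.Icc (-(N : ℤ)) (N : ℤ)},
            ∫⁻ ω, (‖h (t : ℤ)‖₊ : ℝ≥0∞) * (‖X (t : ℤ) ω‖₊ : ℝ≥0∞) ∂ℙ :=
            lintegral_tsum fun t =>
              (((hXmeas t).nnnorm.coe_nnreal_ennreal).const_mul _).aemeasurable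
        _ = ∑' t : {t : ℤ // t ∉ Finset.Icc (-(N : ℤ)) (N : ℤ)}, (‖h (t : ℤ)‖₊ : ℝ≥0∞) * M := by
            congr 1; funext t
            rw [lintegral_const_mul _ ((hXmeas t).nnnorm.coe_nnreal_ennreal), hMt t]
        _ = (∑' t : {t : ℤ // t ∉ Finset.Icc (-(N : ℤ)) (N : ℤ)}, (‖h (t : ℤ)‖₊ : ℝ≥0∞)) * M :=
            ENNReal.tsum_mul_right
    have htail : Tendsto (fun N : ℕ =>
        (∑' t : {t : ℤ // t ∉ Finset.Icc (-(N : ℤ)) (N : ℤ)}, (‖h (t : ℤ)‖₊ : ℝ≥0∞)) * M)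
        atTop (nhds 0) := by
      have h1 := ENNReal.tendsto_tsum_compl_atTop_zero (f := fun t : ℤ => (‖h t‖₊ : ℝ≥0∞)) hAtop
      have h2 := h1.comp hIcc
      have h3 := ENNReal.Tendsto.mul_const h2 (Or.inr hMtop)
      simpa using h3
    exact tendsto_of_tendsto_of_tendsto_of_le_of_le tendsto_const_nhds htail
      (fun N => zero_le) hbound
  · -- the integral bound
    have hBnn : (0 : ℝ) ≤ 2 / sq * (|γ| / x) * ((1 - x) ^ 2)⁻¹ := by positivity
    have hInn : (0 : ℝ) ≤ ∫ ω, |X 0 ω| ∂ℙ := integral_nonneg fun ω => abs_nonneg _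
    have hMval : M = ENNReal.ofReal (∫ ω, |X 0 ω| ∂ℙ) := by
      have h1 : M = ∫⁻ ω, ENNReal.ofReal |X 0 ω| ∂ℙ := by
        rw [hMdef]
        congr 1
        funext ω
        rw [← ofReal_norm_eq_coe_nnnorm, Real.norm_eq_abs]
      rw [h1, ← ofReal_integral_eq_lintegral_ofReal hXint.abs
        (Filter.Eventually.of_forall fun ω => abs_nonneg _)]
    have hB'B : |γ| / sq * (2 * ((1 - x) ^ 2)⁻¹) ≤ 2 / sq * (|γ| / x) * ((1 - x) ^ 2)⁻¹ := by
      have hγx : |γ| ≤ |γ| / x := by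
        rw [le_div_iff₀ hx0]
        nlinarith [abs_nonneg γ]
      calc |γ| / sq * (2 * ((1 - x) ^ 2)⁻¹) = 2 / sq * |γ| * ((1 - x) ^ 2)⁻¹ := by ring
        _ ≤ 2 / sq * (|γ| / x) * ((1 - x) ^ 2)⁻¹ := by
            have h1 : (0:ℝ) ≤ 2 / sq := by positivity
            have h2 : (0:ℝ) ≤ ((1 - x) ^ 2)⁻¹ := by positivity
            nlinarith [mul_le_mul_of_nonneg_left hγx h1]
    calc ∫ ω, ‖R ω‖ ∂ℙ = (∫⁻ ω, (‖R ω‖₊ : ℝ≥0∞) ∂ℙ).toReal :=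
          integral_norm_eq_lintegral_enorm hRmeas
      _ ≤ ((ENNReal.ofReal (2 / sq * (|γ| / x) * ((1 - x) ^ 2)⁻¹)) *
            ENNReal.ofReal (∫ ω, |X 0 ω| ∂ℙ)).toReal := by
          apply ENNReal.toReal_mono
          · exact ENNReal.mul_ne_top ENNReal.ofReal_ne_top ENNReal.ofReal_ne_top
          · calc ∫⁻ ω, (‖R ω‖₊ : ℝ≥0∞) ∂ℙ ≤ A * M := hRlint
              _ ≤ ENNReal.ofReal (2 / sq * (|γ| / x) * ((1 - x) ^ 2)⁻¹) *
                  ENNReal.ofReal (∫ ω, |X 0 ω| ∂ℙ) := by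
                  rw [hMval]
                  refine mul_le_mul_left ?_ _
                  exact le_trans hAbound (ENNReal.ofReal_le_ofReal hB'B)
      _ = 2 / sq * (|γ| / x) * ((1 - x) ^ 2)⁻¹ * ∫ ω, |X 0 ω| ∂ℙ := by
          rw [← ENNReal.ofReal_mul hBnn, ENNReal.toReal_ofReal (by positivity)]
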